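/- arXiv:1206.0326 — 2 statements merged into one kernel-verified Lean document; each statement's English description precedes it below -/
import Mathlib

section
/- Suppose that for all finite nilpotent commutative semigroups S with zero and for n ∈ {n_1, n_2}, the inequality card(S^(n) \ {0}) · n ≤ card(S \ {0}) holds. Then the same inequality holds for n = n_1·n_2, for all such S. -/
open Pointwise

/-- `pw x n` is the `n`-th power of `x` in any magma, for `n ≥ 1`
(with the junk value `pw x 0 = x`). -/
def pw {R : Type*} [Mul R] (x : R) : ℕ → R
  | 0 => x
  | 1 => x
  | n + 2 => x * pw x (n + 1)

lemma pw_succ {R : Type*} [Mul R] (x : R) : ∀ n, 1 ≤ n → pw x (n + 1) = x * pw x n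
  | _ + 1, _ => rfl

lemma pw_zero' {S : Type*} [MulZeroClass S] : ∀ n, pw (0 : S) n = 0
  | 0 => rfl
  | 1 => rfl
  | n + 2 => by show (0 : S) * pw 0 (n + 1) = 0; rw [zero_mul]

lemma pw_map {A B : Type*} [Mul A] [Mul B] (f : A → B)
    (hf : ∀ a b, f (a * b) = f a * f b) (x : A) : ∀ n, f (pw x n) = pw (f x) n
  | 0 => rfl
  | 1 => rfl
  | n + 2 => by
      show f (x * pw x (n + 1)) = f x * pw (f x) (n + 1)
      rw [hf, pw_map f hf x (n + 1)]

lemma pw_mul {S : Type*} [Semigroup S] (comm : ∀ a b : S, a * b = b * a) (x y : S) :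
    ∀ n, pw (x * y) n = pw x n * pw y n
  | 0 => rfl
  | 1 => rfl
  | n + 2 => by
      letI : CommSemigroup S := { ‹Semigroup S› with mul_comm := comm }
      show (x * y) * pw (x * y) (n + 1) = (x * pw x (n + 1)) * (y * pw y (n + 1))
      rw [pw_mul comm x y (n + 1), mul_mul_mul_comm]

lemma pw_add {S : Type*} [Semigroup S] (x : S) :
    ∀ m n, 1 ≤ m → 1 ≤ n → pw x m * pw x n = pw x (m + n)
  | 0, _, hm, _ => absurd hm (by omega)
  | 1, n, _, hn => by
      show x * pw x n = pw x (1 + n)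
      rw [Nat.add_comm, pw_succ x n hn]
  | m + 2, n, _, hn => by
      show (x * pw x (m + 1)) * pw x n = pw x (m + 2 + n)
      rw [mul_assoc, pw_add x (m + 1) n (by omega) hn]
      have h : m + 2 + n = (m + 1 + n) + 1 := by omega
      rw [h, pw_succ x (m + 1 + n) (by omega)]

lemma pw_pw {S : Type*} [Semigroup S] (x : S) :
    ∀ m n, 1 ≤ m → 1 ≤ n → pw (pw x m) n = pw x (m * n)
  | _, 0, _, hn => absurd hn (by omega)
  | m, 1, _, _ => by show pw x m = pw x (m * 1); rw [Nat.mul_one]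
  | m, n + 2, hm, _ => by
      show pw x m * pw (pw x m) (n + 1) = pw x (m * (n + 2))
      rw [pw_pw x m (n + 1) hm (by omega),
        pw_add x m (m * (n + 1)) hm (Nat.mul_pos hm (by omega))]
      congr 1
      ring

lemma pw_set_mem {R : Type*} [Mul R] {A : Set R} {x : R} (hx : x ∈ A) :
    ∀ n, pw x n ∈ pw A n
  | 0 => hx
  | 1 => hx
  | n + 2 => by
      show x * pw x (n + 1) ∈ A * pw A (n + 1)
      exact Set.mul_mem_mul hx (pw_set_mem hx (n + 1))

lemma pw_set_mono {R : Type*} [Mul R] {A B : Set R} (h : A ⊆ B) : ∀ n, pw A n ⊆ pw B n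
  | 0 => h
  | 1 => h
  | n + 2 => by
      show A * pw A (n + 1) ⊆ B * pw B (n + 1)
      exact Set.mul_subset_mul h (pw_set_mono h (n + 1))

theorem stmt_10 (n₁ n₂ : ℕ) (h₁ : 1 ≤ n₁) (h₂ : 1 ≤ n₂)
    (H : ∀ (S : Type) [SemigroupWithZero S], (∀ a b : S, a * b = b * a) → Finite S →
        (∃ m, 1 ≤ m ∧ pw (Set.univ : Set S) m = {0}) →
        ∀ n, n = n₁ ∨ n = n₂ →
          n * ((Set.range fun s : S => pw s n) \ {0}).ncard
            ≤ ((Set.univ : Set S) \ {0}).ncard) :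
    ∀ (S : Type) [SemigroupWithZero S], (∀ a b : S, a * b = b * a) → Finite S →
      (∃ m, 1 ≤ m ∧ pw (Set.univ : Set S) m = {0}) →
      n₁ * n₂ * ((Set.range fun s : S => pw s (n₁ * n₂)) \ {0}).ncard
        ≤ ((Set.univ : Set S) \ {0}).ncard := by
  intro S _ comm hfin hnil
  haveI := hfin
  obtain ⟨m, hm, hSm⟩ := hnil
  set R : Set S := Set.range fun s : S => pw s n₁ with hR
  have hmul : ∀ a b : S, a ∈ R → b ∈ R → a * b ∈ R := by
    rintro _ _ ⟨s, rfl⟩ ⟨t, rfl⟩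
    exact ⟨s * t, pw_mul comm s t n₁⟩
  have h0R : (0 : S) ∈ R := ⟨0, pw_zero' n₁⟩
  let T := {x : S // x ∈ R}
  letI : Mul T := ⟨fun a b => ⟨a.1 * b.1, hmul _ _ a.2 b.2⟩⟩
  letI : Zero T := ⟨⟨0, h0R⟩⟩
  letI : SemigroupWithZero T :=
    { mul_assoc := fun a b c => Subtype.ext (mul_assoc a.1 b.1 c.1)
      zero_mul := fun a => Subtype.ext (zero_mul a.1)
      mul_zero := fun a => Subtype.ext (mul_zero a.1) }
  have hvalmul : ∀ a b : T, ((a * b : T) : S) = (a : S) * (b : S) := fun _ _ => rfl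
  have commT : ∀ a b : T, a * b = b * a := fun a b => Subtype.ext (comm a.1 b.1)
  have finT : Finite T := Subtype.finite
  have hval_inj : Function.Injective (Subtype.val : T → S) := Subtype.val_injective
  -- nilpotency of T
  let F : T →ₙ* S := ⟨Subtype.val, fun _ _ => rfl⟩
  have himg : ∀ s t : Set T, Subtype.val '' (s * t) = (Subtype.val '' s) * (Subtype.val '' t) :=
    fun s t => Set.image_mul (m := F)
  have hpwT : pw (Set.univ : Set T) m = {0} := by
    rw [Set.eq_singleton_iff_unique_mem]
    constructor
    · have := pw_set_mem (Set.mem_univ (0 : T)) m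
      rwa [pw_zero'] at this
    · intro x hx
      have hximg : (x : S) ∈ Subtype.val '' pw (Set.univ : Set T) m :=
        ⟨x, hx, rfl⟩
      rw [pw_map (Set.image Subtype.val) himg Set.univ m] at hximg
      have : (x : S) ∈ pw (Set.univ : Set S) m :=
        pw_set_mono (Set.subset_univ _) m hximg
      rw [hSm] at this
      exact Subtype.ext this
  have key₂ := H T commT finT ⟨m, hm, hpwT⟩ n₂ (Or.inr rfl)
  have key₁ := H S comm hfin ⟨m, hm, hSm⟩ n₁ (Or.inl rfl)
  -- image equalities
  have E1 : Subtype.val '' ((Set.range fun t : T => pw t n₂) \ {0})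
      = (Set.range fun s : S => pw s (n₁ * n₂)) \ {0} := by
    ext x
    constructor
    · rintro ⟨y, ⟨⟨t, rfl⟩, hy0⟩, rfl⟩
      have hv : ((pw t n₂ : T) : S) = pw (t : S) n₂ := pw_map Subtype.val hvalmul t n₂
      obtain ⟨s, hs⟩ := t.2
      refine ⟨⟨s, ?_⟩, ?_⟩
      · show pw s (n₁ * n₂) = _
        rw [hv, ← hs, ]
        exact (pw_pw s n₁ n₂ h₁ h₂).symm
      · intro hx0
        apply hy0
        exact Subtype.ext hx0
    · rintro ⟨⟨s, rfl⟩, hx0⟩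
      refine ⟨pw (⟨pw s n₁, ⟨s, rfl⟩⟩ : T) n₂, ⟨⟨_, rfl⟩, ?_⟩, ?_⟩
      · intro h0
        apply hx0
        have hv := pw_map Subtype.val hvalmul (⟨pw s n₁, ⟨s, rfl⟩⟩ : T) n₂
        have : ((pw (⟨pw s n₁, ⟨s, rfl⟩⟩ : T) n₂ : T) : S) = 0 := by rw [h0]; rfl
        rw [hv] at this
        show pw s (n₁ * n₂) ∈ ({0} : Set S)
        rw [← pw_pw s n₁ n₂ h₁ h₂]
        exact this
      · have hv := pw_map Subtype.val hvalmul (⟨pw s n₁, ⟨s, rfl⟩⟩ : T) n₂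
        rw [hv]
        exact pw_pw s n₁ n₂ h₁ h₂
  have E2 : Subtype.val '' ((Set.univ : Set T) \ {0}) = R \ {0} := by
    ext x
    constructor
    · rintro ⟨y, ⟨-, hy0⟩, rfl⟩
      exact ⟨y.2, fun h => hy0 (Subtype.ext h)⟩
    · rintro ⟨hxR, hx0⟩
      exact ⟨⟨x, hxR⟩, ⟨trivial, fun h => hx0 (congrArg Subtype.val h)⟩, rfl⟩
  have e1 : ((Set.range fun s : S => pw s (n₁ * n₂)) \ {0}).ncard
      = ((Set.range fun t : T => pw t n₂) \ ({0} : Set T)).ncard := by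
    rw [← E1, Set.ncard_image_of_injective _ hval_inj]
  have e2 : ((Set.univ : Set T) \ ({0} : Set T)).ncard = (R \ {0}).ncard := by
    rw [← E2, Set.ncard_image_of_injective _ hval_inj]
  calc n₁ * n₂ * ((Set.range fun s : S => pw s (n₁ * n₂)) \ {0}).ncard
      = n₁ * (n₂ * ((Set.range fun t : T => pw t n₂) \ ({0} : Set T)).ncard) := by
        rw [e1, mul_assoc]
    _ ≤ n₁ * ((Set.univ : Set T) \ ({0} : Set T)).ncard := Nat.mul_le_mul_left _ key₂
    _ = n₁ * (R \ {0}).ncard := by rw [e2]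
    _ ≤ ((Set.univ : Set S) \ {0}).ncard := key₁
end

section
/- For any prime p > 2 and any integer i with 1 < i < p, there exists a finite commutative semigroup S with zero and a subset X ⊆ S such that the p-th power map is injective on X and sends no nonzero element of X to 0, yet card(X^(i) \ {0}) < card(X \ {0}). -/
open Pointwise

/-- A witness for Statement 13: a finite commutative semigroup $S$ with zero and a
subset $X$ on which the $p$-th power map is injective and kills no nonzero element,
yet $X^{(i)}$ is smaller than $X$ away from zero. -/
structure Stmt13Witness (p i : ℕ) where
  S : Type
  [inst : SemigroupWithZero S]
  comm : ∀ a b : S, a * b = b * a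
  fin : Finite S
  X : Set S
  inj : Set.InjOn (fun x => pw x p) X
  nz : ∀ x ∈ X, x ≠ 0 → pw x p ≠ 0
  card_lt : (((fun x => pw x i) '' X) \ {0}).ncard < (X \ {0}).ncard

lemma pw_eq_pow {M : Type*} [Monoid M] (x : M) : ∀ n : ℕ, pw x (n + 1) = x ^ (n + 1)
  | 0 => by simp [pw]
  | n + 1 => by rw [pw, pw_eq_pow x n, ← pow_succ']

theorem stmt_13 (p i : ℕ) (hp : p.Prime) (hp2 : 2 < p) (hi1 : 1 < i) (hip : i < p) :
    Nonempty (Stmt13Witness p i) := by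
  haveI : NeZero i := ⟨by omega⟩
  set G := Multiplicative (ZMod i)
  set S := WithZero G
  have hcardG : Nat.card G = i := by
    simp [G, Nat.card_eq_fintype_card, ZMod.card]
  have hcop : (Nat.card G).Coprime p := by
    rw [hcardG, Nat.coprime_comm]
    exact (hp.coprime_iff_not_dvd).2 (fun h => absurd (Nat.le_of_dvd (by omega) h) (by omega))
  set X : Set S := {x | x ≠ 0} with hX
  have hXrange : X = Set.range ((↑·) : G → S) := by
    ext x
    simp only [hX, Set.mem_setOf_eq, Set.mem_range]
    constructor
    · intro h
      obtain ⟨a, rfl⟩ := WithZero.ne_zero_iff_exists.1 h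
      exact ⟨a, rfl⟩
    · rintro ⟨a, rfl⟩; exact WithZero.coe_ne_zero
  -- p-th power map as coe of p-th power in G
  obtain ⟨p', rfl⟩ : ∃ p', p = p' + 1 := ⟨p - 1, by omega⟩
  obtain ⟨i', rfl⟩ : ∃ i', i = i' + 1 := ⟨i - 1, by omega⟩
  refine ⟨⟨S, (fun a b => mul_comm a b), (inferInstance : Finite (Option G)), X, ?_, ?_, ?_⟩⟩
  · -- injectivity
    intro a ha b hb hab
    rw [hXrange] at ha hb
    obtain ⟨u, rfl⟩ := ha
    obtain ⟨v, rfl⟩ := hb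
    have hab' : ((u ^ (p' + 1) : G) : S) = ((v ^ (p' + 1) : G) : S) := by
      rw [WithZero.coe_pow, WithZero.coe_pow]
      exact (pw_eq_pow (u : S) p').symm.trans (hab.trans (pw_eq_pow (v : S) p'))
    rw [WithZero.coe_inj] at hab'
    exact congrArg _ ((powCoprime hcop).injective
      (show powCoprime hcop u = powCoprime hcop v from hab'))
  · intro x hx hx0
    rw [hXrange] at hx
    obtain ⟨u, rfl⟩ := hx
    rw [pw_eq_pow, ← WithZero.coe_pow]
    exact WithZero.coe_ne_zero
  · -- cardinality
    have himg : ((fun x => pw x (i' + 1)) '' X) = {(1 : S)} := by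
      apply Set.eq_singleton_iff_nonempty_unique_mem.2
      constructor
      · exact ⟨pw ((1 : G) : S) (i' + 1), ⟨((1 : G) : S), by
          simp only [hXrange, Set.mem_range]; exact ⟨1, WithZero.coe_one⟩, rfl⟩⟩
      · rintro y ⟨x, hx, rfl⟩
        rw [hXrange] at hx
        obtain ⟨u, rfl⟩ := hx
        show pw ((u : S)) (i' + 1) = 1
        rw [pw_eq_pow, ← WithZero.coe_pow]
        have : u ^ (i' + 1) = 1 := by
          have h : u ^ Fintype.card G = 1 := pow_card_eq_one
          rwa [Fintype.card_eq_nat_card, hcardG] at h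
        rw [this, WithZero.coe_one]
    rw [himg]
    have h1 : (({(1 : S)} : Set S) \ {0}).ncard = 1 := by
      rw [Set.diff_singleton_eq_self (by simp)]
      exact Set.ncard_singleton _
    have h2 : (X \ {0}).ncard = i' + 1 := by
      rw [Set.diff_singleton_eq_self (by simp [hX]), hXrange,
        ← Nat.card_coe_set_eq, Nat.card_range_of_injective (fun a b h => WithZero.coe_inj.1 h),
        hcardG]
    omega
end
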